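/- For 1 ≤ d ≤ n−1 with 2d ≤ n, the variance of the number of d-inversions of a uniformly random permutation in S_n equals d³/18 + d²/24 + (n/12 − 1/72)·d. -/

import Mathlib

open Finset

namespace VarInv

variable {n : ℕ}

abbrev PF (n : ℕ) := Equiv.Perm (Fin n)

lemma card_mulRight (P : PF n → Prop) [DecidablePred P] (τ : PF n) :
    ((univ : Finset (PF n)).filter fun σ => P (σ * τ)).card
      = ((univ : Finset (PF n)).filter P).card := by
  apply Finset.card_bij' (fun σ _ => σ * τ) (fun σ _ => σ * τ⁻¹)
  · intro a ha; simp only [mem_filter, mem_univ, true_and] at ha ⊢; exact ha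
  · intro a ha; simp only [mem_filter, mem_univ, true_and] at ha ⊢
    simpa [mul_assoc] using ha
  · intro a _; simp [mul_assoc]
  · intro a _; simp [mul_assoc]

lemma apply_mul_swap (σ : PF n) (a b x : Fin n) :
    (σ * Equiv.swap a b) x = σ (Equiv.swap a b x) := rfl

lemma ne_apply (σ : PF n) {a b : Fin n} (hab : a ≠ b) : σ a ≠ σ b :=
  fun h => hab (σ.injective h)

lemma two_mul_count (a b : Fin n) (hab : a ≠ b) :
    2 * ((univ : Finset (PF n)).filter fun σ => σ b < σ a).card
      = Fintype.card (PF n) := by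
  have h1 : ((univ : Finset (PF n)).filter fun σ => σ b < σ a).card
      = ((univ : Finset (PF n)).filter fun σ => σ a < σ b).card := by
    have := card_mulRight (n := n) (fun σ => σ b < σ a) (Equiv.swap a b)
    simp only [apply_mul_swap, Equiv.swap_apply_left, Equiv.swap_apply_right] at this
    exact this.symm
  have h3 : ((univ : Finset (PF n)).filter fun σ => ¬ σ b < σ a)
      = ((univ : Finset (PF n)).filter fun σ => σ a < σ b) := by
    apply Finset.filter_congr
    intro σ _
    have h := ne_apply σ hab
    constructor
    · intro hnl; exact lt_of_le_of_ne (not_lt.mp hnl) h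
    · intro hl; exact not_lt.mpr hl.le
  have h2 := Finset.card_filter_add_card_filter_not
    (s := (univ : Finset (PF n))) (fun σ => σ b < σ a)
  rw [h3, ← h1] at h2
  simpa [two_mul, Finset.card_univ] using h2

/-- number of σ with σ z < σ y < σ x -/
def S3 (x y z : Fin n) : ℕ :=
  ((univ : Finset (PF n)).filter fun σ => σ z < σ y ∧ σ y < σ x).card

lemma S3_perm (x y z : Fin n) (τ : PF n) : S3 (τ x) (τ y) (τ z) = S3 x y z := by
  unfold S3
  have h := card_mulRight (n := n) (fun σ => σ (τ z) < σ (τ y) ∧ σ (τ y) < σ (τ x)) τ⁻¹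
  simp only [Equiv.Perm.mul_apply, Equiv.Perm.inv_def, Equiv.symm_apply_apply] at h
  exact h.symm

lemma S3_all_eq (a b c : Fin n) (hab : a ≠ b) (hac : a ≠ c) (hbc : b ≠ c) :
    S3 a c b = S3 a b c ∧ S3 b a c = S3 a b c ∧ S3 b c a = S3 a b c ∧
    S3 c a b = S3 a b c ∧ S3 c b a = S3 a b c := by
  have e1 : S3 a c b = S3 a b c := by
    have := S3_perm (n := n) a c b (Equiv.swap b c)
    rw [Equiv.swap_apply_of_ne_of_ne hab hac, Equiv.swap_apply_right, Equiv.swap_apply_left] at this; exact this.symm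
  have e2 : S3 b a c = S3 a b c := by
    have := S3_perm (n := n) b a c (Equiv.swap a b)
    rw [Equiv.swap_apply_right, Equiv.swap_apply_left,
      Equiv.swap_apply_of_ne_of_ne (Ne.symm hac) (Ne.symm hbc)] at this; exact this.symm
  have e5 : S3 c b a = S3 a b c := by
    have := S3_perm (n := n) c b a (Equiv.swap a c)
    rw [Equiv.swap_apply_right, Equiv.swap_apply_left,
      Equiv.swap_apply_of_ne_of_ne (Ne.symm hab) hbc] at this; exact this.symm
  have e4 : S3 c a b = S3 a c b := by
    have := S3_perm (n := n) c a b (Equiv.swap a c)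
    rw [Equiv.swap_apply_right, Equiv.swap_apply_left,
      Equiv.swap_apply_of_ne_of_ne (Ne.symm hab) hbc] at this; exact this.symm
  have e3 : S3 b c a = S3 c b a := by
    have := S3_perm (n := n) b c a (Equiv.swap b c)
    rw [Equiv.swap_apply_left, Equiv.swap_apply_right,
      Equiv.swap_apply_of_ne_of_ne hab hac] at this; exact this.symm
  exact ⟨e1, e2, e3.trans e5, e4.trans e1, e5⟩

lemma six_partition (a b c : Fin n) (hab : a ≠ b) (hac : a ≠ c) (hbc : b ≠ c) :
    S3 a b c + S3 a c b + S3 b a c + S3 b c a + S3 c a b + S3 c b a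
      = Fintype.card (PF n) := by
  unfold S3
  simp only [Finset.card_filter]
  rw [← Finset.card_univ, Finset.card_eq_sum_ones]
  rw [← Finset.sum_add_distrib, ← Finset.sum_add_distrib, ← Finset.sum_add_distrib,
    ← Finset.sum_add_distrib, ← Finset.sum_add_distrib]
  apply Finset.sum_congr rfl
  intro σ _
  have h1 : (σ a : ℕ) ≠ σ b := by
    have := ne_apply σ hab; simpa [Fin.val_eq_val] using this
  have h2 : (σ a : ℕ) ≠ σ c := by
    have := ne_apply σ hac; simpa [Fin.val_eq_val] using this
  have h3 : (σ b : ℕ) ≠ σ c := by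
    have := ne_apply σ hbc; simpa [Fin.val_eq_val] using this
  simp only [Fin.lt_def]
  split_ifs <;> omega

lemma six_mul_S3 (a b c : Fin n) (hab : a ≠ b) (hac : a ≠ c) (hbc : b ≠ c) :
    6 * S3 a b c = Fintype.card (PF n) := by
  obtain ⟨e1, e2, e3, e4, e5⟩ := S3_all_eq a b c hab hac hbc
  have := six_partition a b c hab hac hbc
  omega


lemma card_pair_congr (P Q : PF n → Prop) [DecidablePred P] [DecidablePred Q]
    (h : ∀ σ : PF n, P σ ↔ Q σ) :
    ((univ : Finset (PF n)).filter P).card = ((univ : Finset (PF n)).filter Q).card := by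
  congr 1; apply Finset.filter_congr; intro σ _; simpa using h σ

lemma three_mul_max (a b c : Fin n) (hab : a ≠ b) (hac : a ≠ c) (hbc : b ≠ c) :
    3 * ((univ : Finset (PF n)).filter fun σ => σ b < σ a ∧ σ c < σ a).card
      = Fintype.card (PF n) := by
  have key : ((univ : Finset (PF n)).filter fun σ => σ b < σ a ∧ σ c < σ a).card
      = S3 a b c + S3 a c b := by
    unfold S3
    simp only [Finset.card_filter]
    rw [← Finset.sum_add_distrib]
    apply Finset.sum_congr rfl
    intro σ _
    have h3 : (σ b : ℕ) ≠ σ c := by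
      have := ne_apply σ hbc; simpa [Fin.val_eq_val] using this
    simp only [Fin.lt_def]
    split_ifs <;> omega
  obtain ⟨e1, _, _, _, _⟩ := S3_all_eq a b c hab hac hbc
  have h6 := six_mul_S3 a b c hab hac hbc
  omega

lemma three_mul_min (a b c : Fin n) (hab : a ≠ b) (hac : a ≠ c) (hbc : b ≠ c) :
    3 * ((univ : Finset (PF n)).filter fun σ => σ b < σ a ∧ σ b < σ c).card
      = Fintype.card (PF n) := by
  have key : ((univ : Finset (PF n)).filter fun σ => σ b < σ a ∧ σ b < σ c).card
      = S3 a c b + S3 c a b := by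
    unfold S3
    simp only [Finset.card_filter]
    rw [← Finset.sum_add_distrib]
    apply Finset.sum_congr rfl
    intro σ _
    have h2 : (σ a : ℕ) ≠ σ c := by
      have := ne_apply σ hac; simpa [Fin.val_eq_val] using this
    simp only [Fin.lt_def]
    split_ifs <;> omega
  obtain ⟨e1, _, _, e4, _⟩ := S3_all_eq a b c hab hac hbc
  have h6 := six_mul_S3 a b c hab hac hbc
  omega

lemma six_mul_chain (a b c : Fin n) (hab : a ≠ b) (hac : a ≠ c) (hbc : b ≠ c) :
    6 * ((univ : Finset (PF n)).filter fun σ => σ b < σ a ∧ σ c < σ b).card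
      = Fintype.card (PF n) := by
  have key : ((univ : Finset (PF n)).filter fun σ => σ b < σ a ∧ σ c < σ b).card
      = S3 a b c := by
    apply card_pair_congr
    intro σ; constructor
    · rintro ⟨h1, h2⟩; exact ⟨h2, h1⟩
    · rintro ⟨h1, h2⟩; exact ⟨h2, h1⟩
  rw [key]; exact six_mul_S3 a b c hab hac hbc

lemma swap_cond_eq (a b c e : Fin n) (hca : c ≠ a) (hcb : c ≠ b) (hea : e ≠ a) (heb : e ≠ b) :
    ((univ : Finset (PF n)).filter fun σ => σ b < σ a ∧ σ e < σ c).card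
      = ((univ : Finset (PF n)).filter fun σ => σ a < σ b ∧ σ e < σ c).card := by
  have h := card_mulRight (n := n) (fun σ => σ b < σ a ∧ σ e < σ c) (Equiv.swap a b)
  simp only [Equiv.Perm.mul_apply, Equiv.swap_apply_left, Equiv.swap_apply_right,
    Equiv.swap_apply_of_ne_of_ne hca hcb, Equiv.swap_apply_of_ne_of_ne hea heb] at h
  exact h.symm

lemma four_mul (a b c e : Fin n) (hab : a ≠ b) (hce : c ≠ e)
    (hca : c ≠ a) (hcb : c ≠ b) (hea : e ≠ a) (heb : e ≠ b) :
    4 * ((univ : Finset (PF n)).filter fun σ => σ b < σ a ∧ σ e < σ c).card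
      = Fintype.card (PF n) := by
  set c1 := ((univ : Finset (PF n)).filter fun σ => σ b < σ a ∧ σ e < σ c).card with hc1
  have e2 : ((univ : Finset (PF n)).filter fun σ => σ a < σ b ∧ σ e < σ c).card = c1 :=
    (swap_cond_eq a b c e hca hcb hea heb).symm
  have e3 : ((univ : Finset (PF n)).filter fun σ => σ e < σ c ∧ σ b < σ a).card
      = ((univ : Finset (PF n)).filter fun σ => σ c < σ e ∧ σ b < σ a).card :=
    swap_cond_eq c e a b hca.symm hea.symm hcb.symm heb.symm
  have e3' : ((univ : Finset (PF n)).filter fun σ => σ e < σ c ∧ σ a < σ b).card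
      = ((univ : Finset (PF n)).filter fun σ => σ c < σ e ∧ σ a < σ b).card :=
    swap_cond_eq c e b a hcb.symm heb.symm hca.symm hea.symm
  have e3c : ((univ : Finset (PF n)).filter fun σ => σ b < σ a ∧ σ c < σ e).card = c1 := by
    rw [hc1]
    rw [card_pair_congr (fun σ => σ b < σ a ∧ σ c < σ e) (fun σ => σ c < σ e ∧ σ b < σ a)
      (fun σ => and_comm),
      ← e3,
      card_pair_congr (fun σ => σ e < σ c ∧ σ b < σ a) (fun σ => σ b < σ a ∧ σ e < σ c)
      (fun σ => and_comm)]
  have e4 : ((univ : Finset (PF n)).filter fun σ => σ a < σ b ∧ σ c < σ e).card = c1 := by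
    rw [card_pair_congr (fun σ => σ a < σ b ∧ σ c < σ e) (fun σ => σ c < σ e ∧ σ a < σ b)
      (fun σ => and_comm),
      ← e3',
      card_pair_congr (fun σ => σ e < σ c ∧ σ a < σ b) (fun σ => σ a < σ b ∧ σ e < σ c)
      (fun σ => and_comm), e2]
  have part : c1
      + ((univ : Finset (PF n)).filter fun σ => σ a < σ b ∧ σ e < σ c).card
      + ((univ : Finset (PF n)).filter fun σ => σ b < σ a ∧ σ c < σ e).card
      + ((univ : Finset (PF n)).filter fun σ => σ a < σ b ∧ σ c < σ e).card
      = Fintype.card (PF n) := by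
    rw [hc1]
    simp only [Finset.card_filter]
    rw [← Finset.card_univ, Finset.card_eq_sum_ones]
    rw [← Finset.sum_add_distrib, ← Finset.sum_add_distrib, ← Finset.sum_add_distrib]
    apply Finset.sum_congr rfl
    intro σ _
    have h1 : (σ a : ℕ) ≠ σ b := by
      have := ne_apply σ hab; simpa [Fin.val_eq_val] using this
    have h2 : (σ c : ℕ) ≠ σ e := by
      have := ne_apply σ hce; simpa [Fin.val_eq_val] using this
    simp only [Fin.lt_def]
    split_ifs <;> omega
  omega

/-- weight: probability that both pairs are inverted -/
def w (p q : (Fin n) × (Fin n)) : ℚ :=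
  if p = q then 1/2
  else if p.1 = q.1 ∨ p.2 = q.2 then 1/3
  else if p.2 = q.1 ∨ p.1 = q.2 then 1/6
  else 1/4

lemma count_two (p q : Fin n × Fin n) (hp : p.1 < p.2) (hq : q.1 < q.2) :
    (((univ : Finset (PF n)).filter fun σ => σ p.2 < σ p.1 ∧ σ q.2 < σ q.1).card : ℚ)
      = (Fintype.card (PF n) : ℚ) * w p q := by
  have hp12 : p.1 ≠ p.2 := ne_of_lt hp
  have hq12 : q.1 ≠ q.2 := ne_of_lt hq
  unfold w
  by_cases hpq : p = q
  · subst hpq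
    rw [card_pair_congr (fun σ => σ p.2 < σ p.1 ∧ σ p.2 < σ p.1) (fun σ => σ p.2 < σ p.1)
      (fun σ => and_self_iff)]
    have h := two_mul_count p.1 p.2 hp12
    have := congrArg (Nat.cast : ℕ → ℚ) h
    push_cast at this
    norm_num
    linarith
  · rw [if_neg hpq]
    by_cases h11 : p.1 = q.1
    · have h22 : p.2 ≠ q.2 := fun h => hpq (Prod.ext h11 h)
      rw [if_pos (Or.inl h11)]
      rw [card_pair_congr (fun σ => σ p.2 < σ p.1 ∧ σ q.2 < σ q.1)
        (fun σ => σ p.2 < σ p.1 ∧ σ q.2 < σ p.1) (by intro σ; rw [h11])]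
      have hac : p.1 ≠ q.2 := by rw [h11]; exact hq12
      have h := three_mul_max p.1 p.2 q.2 hp12 hac h22
      have := congrArg (Nat.cast : ℕ → ℚ) h
      push_cast at this
      linarith
    · by_cases h22 : p.2 = q.2
      · rw [if_pos (Or.inr h22)]
        rw [card_pair_congr (fun σ => σ p.2 < σ p.1 ∧ σ q.2 < σ q.1)
          (fun σ => σ p.2 < σ p.1 ∧ σ p.2 < σ q.1) (by intro σ; rw [h22])]
        have hbc : p.2 ≠ q.1 := by rw [h22]; exact (ne_of_lt hq).symm
        have hac : p.1 ≠ q.1 := h11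
        have h := three_mul_min p.1 p.2 q.1 hp12 hac hbc
        have := congrArg (Nat.cast : ℕ → ℚ) h
        push_cast at this
        linarith
      · rw [if_neg (by tauto)]
        by_cases h21 : p.2 = q.1
        · rw [if_pos (Or.inl h21)]
          rw [card_pair_congr (fun σ => σ p.2 < σ p.1 ∧ σ q.2 < σ q.1)
            (fun σ => σ p.2 < σ p.1 ∧ σ q.2 < σ p.2) (by intro σ; rw [h21])]
          have hac : p.1 ≠ q.2 := ne_of_lt (lt_trans hp (h21 ▸ hq))
          have hbc : p.2 ≠ q.2 := by rw [h21]; exact hq12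
          have h := six_mul_chain p.1 p.2 q.2 hp12 hac hbc
          have := congrArg (Nat.cast : ℕ → ℚ) h
          push_cast at this
          linarith
        · by_cases h12 : p.1 = q.2
          · rw [if_pos (Or.inr h12)]
            rw [card_pair_congr (fun σ => σ p.2 < σ p.1 ∧ σ q.2 < σ q.1)
              (fun σ => σ q.2 < σ q.1 ∧ σ p.2 < σ q.2)
              (by intro σ; rw [← h12]; exact and_comm)]
            have hab : q.1 ≠ q.2 := hq12
            have hac : q.1 ≠ p.2 := ne_of_lt (lt_trans hq (h12 ▸ hp))
            have hbc : q.2 ≠ p.2 := h12 ▸ hp12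
            have h := six_mul_chain q.1 q.2 p.2 hab hac hbc
            have := congrArg (Nat.cast : ℕ → ℚ) h
            push_cast at this
            linarith
          · rw [if_neg (by tauto)]
            have h := four_mul p.1 p.2 q.1 q.2 hp12 hq12
              (Ne.symm h11) (Ne.symm h21) (Ne.symm h12) (Ne.symm h22)
            have := congrArg (Nat.cast : ℕ → ℚ) h
            push_cast at this
            linarith

lemma sum_ind {α : Type*} (s : Finset α) (P : α → Prop) [DecidablePred P] (c : ℚ) :
    (∑ x ∈ s, if P x then c else 0) = c * (s.filter P).card := by
  rw [← Finset.sum_filter, Finset.sum_const, nsmul_eq_mul, mul_comm]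

lemma card_shift_r (M M' t : ℕ) :
    ((range M ×ˢ range M').filter fun x : ℕ × ℕ => x.2 = x.1 + t).card = min M (M' - t) := by
  rw [← Finset.card_range (min M (M' - t))]
  apply Finset.card_bij' (fun x _ => x.1) (fun j _ => (j, j + t))
  · intro x hx; simp only [mem_filter, mem_product, mem_range] at hx ⊢
    rw [Nat.lt_min]; omega
  · intro j hj; simp only [mem_range, Nat.lt_min] at hj
    simp only [mem_filter, mem_product, mem_range]
    exact ⟨⟨by omega, by omega⟩, trivial⟩
  · intro x hx; simp only [mem_filter, mem_product, mem_range] at hx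
    exact Prod.ext rfl hx.2.symm
  · intro j _; rfl

lemma card_shift_l (M M' t : ℕ) :
    ((range M ×ˢ range M').filter fun x : ℕ × ℕ => x.1 = x.2 + t).card = min (M - t) M' := by
  rw [← Finset.card_range (min (M - t) M')]
  apply Finset.card_bij' (fun x _ => x.2) (fun j _ => (j + t, j))
  · intro x hx; simp only [mem_filter, mem_product, mem_range] at hx ⊢
    rw [Nat.lt_min]; omega
  · intro j hj; simp only [mem_range, Nat.lt_min] at hj
    simp only [mem_filter, mem_product, mem_range]
    exact ⟨⟨by omega, by omega⟩, trivial⟩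
  · intro x hx; simp only [mem_filter, mem_product, mem_range] at hx
    exact Prod.ext hx.2.symm rfl
  · intro j _; rfl

lemma sum_Icc_id (d : ℕ) : ∑ g ∈ Icc 1 d, (g : ℚ) = d * (d + 1) / 2 := by
  induction d with
  | zero => simp
  | succ d ih =>
    rw [← Finset.insert_Icc_right_eq_Icc_add_one (by omega), Finset.sum_insert (by simp)]
    rw [ih]; push_cast; ring

lemma sum_min_sq (d : ℕ) :
    ∑ g1 ∈ Icc 1 d, ∑ g2 ∈ Icc 1 d, ((min g1 g2 : ℕ) : ℚ)
      = d * (d + 1) * (2 * d + 1) / 6 := by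
  induction d with
  | zero => simp
  | succ d ih =>
    have hins : Icc 1 (d + 1) = insert (d+1) (Icc 1 d) := by
      rw [← Finset.insert_Icc_right_eq_Icc_add_one (by omega)]
    have hnm : (d+1) ∉ Icc 1 d := by simp
    rw [hins, Finset.sum_insert hnm]
    have row : ∑ g2 ∈ insert (d+1) (Icc 1 d), ((min (d+1) g2 : ℕ) : ℚ)
        = (d+1 : ℚ) + d * (d+1)/2 := by
      rw [Finset.sum_insert hnm]
      have : ∑ g2 ∈ Icc 1 d, ((min (d+1) g2 : ℕ) : ℚ) = ∑ g2 ∈ Icc 1 d, (g2 : ℚ) := by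
        apply Finset.sum_congr rfl; intro g hg
        simp only [mem_Icc] at hg
        rw [min_eq_right (by omega)]
      rw [this, sum_Icc_id]; simp
    rw [row]
    have cols : ∑ g1 ∈ Icc 1 d, ∑ g2 ∈ insert (d+1) (Icc 1 d), ((min g1 g2 : ℕ) : ℚ)
        = ∑ g1 ∈ Icc 1 d, ((g1 : ℚ) + ∑ g2 ∈ Icc 1 d, ((min g1 g2 : ℕ) : ℚ)) := by
      apply Finset.sum_congr rfl; intro g hg
      simp only [mem_Icc] at hg
      rw [Finset.sum_insert hnm, min_eq_left (by omega)]
    rw [cols, Finset.sum_add_distrib, sum_Icc_id, ih]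
    push_cast; ring


/-- weight on ℕ-coded pairs (gap, start) -/
def Gn (x y : ℕ × ℕ) : ℚ :=
  if x = y then 1/4
  else if x.2 = y.2 ∨ x.2 + x.1 = y.2 + y.1 then 1/12
  else if x.2 + x.1 = y.2 ∨ y.2 + y.1 = x.2 then -(1/12)
  else 0

lemma Gn_diag (g i k : ℕ) (hg : 1 ≤ g) :
    Gn (g, i) (g, k) = (if k = i then (1/4 : ℚ) else 0)
      + (if k = i + g then -(1/12 : ℚ) else 0)
      + (if i = k + g then -(1/12 : ℚ) else 0) := by
  unfold Gn
  simp only [Prod.mk.injEq, eq_self_iff_true, true_and]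
  split_ifs <;> first | omega | norm_num

lemma Gn_off (g1 i g2 k : ℕ) (hg1 : 1 ≤ g1) (hg2 : 1 ≤ g2) (hne : g1 ≠ g2) :
    Gn (g1, i) (g2, k) = (if k = i then (1/12 : ℚ) else 0)
      + (if k + g2 = i + g1 then (1/12 : ℚ) else 0)
      + (if k = i + g1 then -(1/12 : ℚ) else 0)
      + (if i = k + g2 then -(1/12 : ℚ) else 0) := by
  unfold Gn
  simp only [Prod.mk.injEq, eq_self_iff_true, true_and]
  split_ifs <;> first | omega | norm_num

lemma inner_diag (n g : ℕ) (hg : 1 ≤ g) (hn : 2 * g ≤ n) :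
    ∑ i ∈ range (n - g), ∑ k ∈ range (n - g), Gn (g, i) (g, k)
      = ((n : ℚ) + g) / 12 := by
  rw [← Finset.sum_product']
  have key : ∀ x ∈ range (n-g) ×ˢ range (n-g), Gn (g, x.1) (g, x.2)
      = (if x.2 = x.1 then (1/4 : ℚ) else 0)
      + (if x.2 = x.1 + g then -(1/12 : ℚ) else 0)
      + (if x.1 = x.2 + g then -(1/12 : ℚ) else 0) := by
    intro x _; exact Gn_diag g x.1 x.2 hg
  rw [Finset.sum_congr rfl key]
  rw [Finset.sum_add_distrib, Finset.sum_add_distrib, sum_ind, sum_ind, sum_ind]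
  have e1 : ((range (n-g) ×ˢ range (n-g)).filter fun x : ℕ × ℕ => x.2 = x.1).card = n - g := by
    have := card_shift_r (n-g) (n-g) 0
    simp only [add_zero, Nat.sub_zero, min_self] at this
    exact this
  have e2 : ((range (n-g) ×ˢ range (n-g)).filter fun x : ℕ × ℕ => x.2 = x.1 + g).card
      = n - 2*g := by
    rw [card_shift_r]; omega
  have e3 : ((range (n-g) ×ˢ range (n-g)).filter fun x : ℕ × ℕ => x.1 = x.2 + g).card
      = n - 2*g := by
    rw [card_shift_l]; omega
  rw [e1, e2, e3]
  rw [Nat.cast_sub (by omega), Nat.cast_sub (by omega)]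
  push_cast
  ring

lemma inner_off (n g1 g2 : ℕ) (hg1 : 1 ≤ g1) (hg2 : 1 ≤ g2) (hne : g1 ≠ g2)
    (hn : g1 + g2 ≤ n) :
    ∑ i ∈ range (n - g1), ∑ k ∈ range (n - g2), Gn (g1, i) (g2, k)
      = ((min g1 g2 : ℕ) : ℚ) / 6 := by
  rw [← Finset.sum_product']
  have key : ∀ x ∈ range (n-g1) ×ˢ range (n-g2), Gn (g1, x.1) (g2, x.2)
      = (if x.2 = x.1 then (1/12 : ℚ) else 0)
      + (if x.2 + g2 = x.1 + g1 then (1/12 : ℚ) else 0)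
      + (if x.2 = x.1 + g1 then -(1/12 : ℚ) else 0)
      + (if x.1 = x.2 + g2 then -(1/12 : ℚ) else 0) := by
    intro x _; exact Gn_off g1 x.1 g2 x.2 hg1 hg2 hne
  rw [Finset.sum_congr rfl key]
  rw [Finset.sum_add_distrib, Finset.sum_add_distrib, Finset.sum_add_distrib,
    sum_ind, sum_ind, sum_ind, sum_ind]
  have e1 : ((range (n-g1) ×ˢ range (n-g2)).filter fun x : ℕ × ℕ => x.2 = x.1).card
      = n - max g1 g2 := by
    have := card_shift_r (n-g1) (n-g2) 0
    simp only [add_zero, Nat.sub_zero] at this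
    rw [this]; omega
  have e3 : ((range (n-g1) ×ˢ range (n-g2)).filter fun x : ℕ × ℕ => x.2 = x.1 + g1).card
      = n - g1 - g2 := by
    rw [card_shift_r]; omega
  have e4 : ((range (n-g1) ×ˢ range (n-g2)).filter fun x : ℕ × ℕ => x.1 = x.2 + g2).card
      = n - g1 - g2 := by
    rw [card_shift_l]; omega
  have e2 : ((range (n-g1) ×ˢ range (n-g2)).filter fun x : ℕ × ℕ => x.2 + g2 = x.1 + g1).card
      = n - max g1 g2 := by
    rcases Nat.lt_or_ge g1 g2 with h | h
    · have hc : ∀ x : ℕ × ℕ, (x.2 + g2 = x.1 + g1) ↔ (x.1 = x.2 + (g2 - g1)) := by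
        intro x; omega
      rw [Finset.filter_congr (fun x _ => hc x), card_shift_l]; omega
    · have hc : ∀ x : ℕ × ℕ, (x.2 + g2 = x.1 + g1) ↔ (x.2 = x.1 + (g1 - g2)) := by
        intro x; omega
      rw [Finset.filter_congr (fun x _ => hc x), card_shift_r]; omega
  rw [e1, e2, e3, e4]
  rcases Nat.lt_or_ge g1 g2 with h | h
  · rw [min_eq_left h.le]
    rw [show n - max g1 g2 = n - g2 by omega]
    rw [Nat.cast_sub (by omega), Nat.cast_sub (by omega), Nat.cast_sub (by omega)]
    push_cast; ring
  · rw [min_eq_right h]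
    rw [show n - max g1 g2 = n - g1 by omega]
    rw [Nat.cast_sub (by omega), Nat.cast_sub (by omega), Nat.cast_sub (by omega)]
    push_cast; ring


lemma outer_sum (n d : ℕ) :
    ∑ g1 ∈ Icc 1 d, ∑ g2 ∈ Icc 1 d,
        (if g1 = g2 then ((n : ℚ) + g1)/12 else ((min g1 g2 : ℕ) : ℚ)/6)
      = (d : ℚ)^3/18 + (d : ℚ)^2/24 + ((n : ℚ)/12 - 1/72) * d := by
  have key : ∀ g1 ∈ Icc 1 d, ∀ g2 ∈ Icc 1 d,
      (if g1 = g2 then ((n : ℚ) + g1)/12 else ((min g1 g2 : ℕ) : ℚ)/6)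
        = ((min g1 g2 : ℕ) : ℚ)/6 + (if g1 = g2 then ((n : ℚ) - g1)/12 else 0) := by
    intro g1 _ g2 _
    by_cases h : g1 = g2
    · subst h; simp only [eq_self_iff_true, if_true, min_self]; ring
    · simp only [if_neg h, add_zero]
  have step1 : ∑ g1 ∈ Icc 1 d, ∑ g2 ∈ Icc 1 d,
      (if g1 = g2 then ((n : ℚ) + g1)/12 else ((min g1 g2 : ℕ) : ℚ)/6)
      = ∑ g1 ∈ Icc 1 d, ∑ g2 ∈ Icc 1 d,
        (((min g1 g2 : ℕ) : ℚ)/6 + (if g1 = g2 then ((n : ℚ) - g1)/12 else 0)) := by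
    apply Finset.sum_congr rfl; intro g1 h1
    apply Finset.sum_congr rfl; intro g2 h2
    exact key g1 h1 g2 h2
  rw [step1]
  simp only [Finset.sum_add_distrib]
  have d1 : ∑ g1 ∈ Icc 1 d, ∑ g2 ∈ Icc 1 d, ((min g1 g2 : ℕ) : ℚ)/6
      = (d : ℚ) * (d + 1) * (2 * d + 1) / 36 := by
    simp only [← Finset.sum_div]
    rw [sum_min_sq d]
    ring
  have d2 : ∑ g1 ∈ Icc 1 d, ∑ g2 ∈ Icc 1 d, (if g1 = g2 then ((n : ℚ) - g1)/12 else 0)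
      = ((n : ℚ) * d - d * (d + 1) / 2) / 12 := by
    have inner : ∀ g1 ∈ Icc 1 d,
        ∑ g2 ∈ Icc 1 d, (if g1 = g2 then ((n : ℚ) - g1)/12 else 0)
          = ((n : ℚ) - g1)/12 := by
      intro g1 h1
      rw [Finset.sum_ite_eq (Icc 1 d) g1 (fun _ => ((n : ℚ) - g1)/12), if_pos h1]
    rw [Finset.sum_congr rfl inner]
    have : ∑ g1 ∈ Icc 1 d, ((n : ℚ) - g1)/12
        = ((∑ _g1 ∈ Icc 1 d, (n : ℚ)) - ∑ g1 ∈ Icc 1 d, (g1 : ℚ))/12 := by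
      rw [← Finset.sum_sub_distrib, Finset.sum_div]
    rw [this, sum_Icc_id, Finset.sum_const, Nat.card_Icc]
    simp only [nsmul_eq_mul]
    push_cast
    ring
  rw [d1, d2]
  ring


variable {n : ℕ}

lemma w_enc (p q : Fin n × Fin n) (hp : p.1 < p.2) (hq : q.1 < q.2) :
    w p q - 1/4 = Gn ((p.2:ℕ) - (p.1:ℕ), (p.1:ℕ)) ((q.2:ℕ) - (q.1:ℕ), (q.1:ℕ)) := by
  have hp' : (p.1 : ℕ) < (p.2 : ℕ) := hp
  have hq' : (q.1 : ℕ) < (q.2 : ℕ) := hq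
  have e0 : (((p.2:ℕ) - (p.1:ℕ), (p.1:ℕ)) = ((q.2:ℕ) - (q.1:ℕ), (q.1:ℕ))) ↔ p = q := by
    rw [Prod.ext_iff, Prod.ext_iff]
    simp only [Fin.ext_iff]
    constructor
    · rintro ⟨h1, h2⟩; omega
    · rintro ⟨h1, h2⟩; omega
  have e1 : ((((p.2:ℕ) - (p.1:ℕ), (p.1:ℕ)) : ℕ × ℕ).2 = (((q.2:ℕ) - (q.1:ℕ), (q.1:ℕ)) : ℕ × ℕ).2
        ∨ (((p.2:ℕ) - (p.1:ℕ), (p.1:ℕ)) : ℕ × ℕ).2 + (((p.2:ℕ) - (p.1:ℕ), (p.1:ℕ)) : ℕ × ℕ).1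
          = (((q.2:ℕ) - (q.1:ℕ), (q.1:ℕ)) : ℕ × ℕ).2 + (((q.2:ℕ) - (q.1:ℕ), (q.1:ℕ)) : ℕ × ℕ).1)
      ↔ (p.1 = q.1 ∨ p.2 = q.2) := by
    simp only [Fin.ext_iff]; constructor
    · rintro (h | h); · left; omega
      · right; omega
    · rintro (h | h); · left; omega
      · right; omega
  have e2 : ((((p.2:ℕ) - (p.1:ℕ), (p.1:ℕ)) : ℕ × ℕ).2 + (((p.2:ℕ) - (p.1:ℕ), (p.1:ℕ)) : ℕ × ℕ).1
          = (((q.2:ℕ) - (q.1:ℕ), (q.1:ℕ)) : ℕ × ℕ).2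
        ∨ (((q.2:ℕ) - (q.1:ℕ), (q.1:ℕ)) : ℕ × ℕ).2 + (((q.2:ℕ) - (q.1:ℕ), (q.1:ℕ)) : ℕ × ℕ).1
          = (((p.2:ℕ) - (p.1:ℕ), (p.1:ℕ)) : ℕ × ℕ).2)
      ↔ (p.2 = q.1 ∨ p.1 = q.2) := by
    simp only [Fin.ext_iff]; constructor
    · rintro (h | h); · left; omega
      · right; omega
    · rintro (h | h); · left; omega
      · right; omega
  unfold w Gn
  simp only [e0, e1, e2]
  split_ifs <;> norm_num

lemma boole_mul_boole (A B : Prop) [Decidable A] [Decidable B] :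
    (if A then (1:ℚ) else 0) * (if B then (1:ℚ) else 0) = if A ∧ B then (1:ℚ) else 0 := by
  by_cases hA : A <;> by_cases hB : B <;> simp [hA, hB]


def vp (n d : ℕ) (p : Fin n × Fin n) : Prop := p.1 < p.2 ∧ (p.2 : ℕ) ≤ (p.1 : ℕ) + d

instance (n d : ℕ) : DecidablePred (vp n d) := fun p => by unfold vp; infer_instance

end VarInv

open Finset VarInv in
/-- For `1 ≤ d ≤ n-1` with `2d ≤ n`, the variance of the number of `d`-inversions
of a uniformly random permutation in `S_n` equals `d³/18 + d²/24 + (n/12 - 1/72)d`. -/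
theorem var_d_inversions_small_d (n d : ℕ) (hd : 1 ≤ d) (hdn : d ≤ n - 1) (h2 : 2 * d ≤ n) :
    let N : ℚ := Fintype.card (Equiv.Perm (Fin n))
    let X : Equiv.Perm (Fin n) → ℚ := fun σ =>
      ((Finset.univ.filter fun p : Fin n × Fin n =>
        p.1 < p.2 ∧ (p.2 : ℕ) ≤ (p.1 : ℕ) + d ∧ σ p.2 < σ p.1).card : ℚ)
    (∑ σ : Equiv.Perm (Fin n), X σ ^ 2) / N - ((∑ σ : Equiv.Perm (Fin n), X σ) / N) ^ 2 =
      (d : ℚ) ^ 3 / 18 + (d : ℚ) ^ 2 / 24 + ((n : ℚ) / 12 - 1 / 72) * d := by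
  intro N X
  have hn2 : 2 ≤ n := by omega
  have hN0 : N ≠ 0 := by
    have : 0 < Fintype.card (Equiv.Perm (Fin n)) := Fintype.card_pos
    simp only [N]
    exact_mod_cast this.ne'
  set V : Finset (Fin n × Fin n) := univ.filter (vp n d) with hV
  -- X as indicator sum
  have hX : ∀ σ : Equiv.Perm (Fin n), X σ
      = ∑ p : Fin n × Fin n, (if vp n d p ∧ σ p.2 < σ p.1 then (1:ℚ) else 0) := by
    intro σ
    simp only [X]
    rw [Finset.card_filter]
    push_cast
    apply Finset.sum_congr rfl
    intro p _
    simp [vp, and_assoc]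
  -- step A
  have stepA : ∑ σ : Equiv.Perm (Fin n), X σ = N / 2 * V.card := by
    calc ∑ σ : Equiv.Perm (Fin n), X σ
        = ∑ σ : Equiv.Perm (Fin n), ∑ p : Fin n × Fin n,
            (if vp n d p ∧ σ p.2 < σ p.1 then (1:ℚ) else 0) :=
          Finset.sum_congr rfl (fun σ _ => hX σ)
      _ = ∑ p : Fin n × Fin n, ∑ σ : Equiv.Perm (Fin n),
            (if vp n d p ∧ σ p.2 < σ p.1 then (1:ℚ) else 0) := Finset.sum_comm
      _ = ∑ p : Fin n × Fin n, (if vp n d p then N/2 else 0) := by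
          apply Finset.sum_congr rfl
          intro p _
          by_cases hp : vp n d p
          · rw [if_pos hp]
            have hcond : ∀ σ : Equiv.Perm (Fin n),
                (vp n d p ∧ σ p.2 < σ p.1) ↔ (σ p.2 < σ p.1) :=
              fun σ => ⟨fun h => h.2, fun h => ⟨hp, h⟩⟩
            rw [Finset.sum_congr rfl (fun σ _ => if_congr (hcond σ) rfl rfl)]
            rw [sum_ind (univ : Finset (Equiv.Perm (Fin n))) (fun σ => σ p.2 < σ p.1) 1]
            have h := two_mul_count p.1 p.2 (ne_of_lt hp.1)
            have hc := congrArg (Nat.cast : ℕ → ℚ) h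
            push_cast at hc
            simp only [N]
            linarith
          · simp [hp]
      _ = N/2 * V.card := by rw [sum_ind univ (vp n d) (N/2)]
  -- step B
  have stepB : ∑ σ : Equiv.Perm (Fin n), X σ ^ 2
      = N * ∑ p ∈ V, ∑ q ∈ V, w p q := by
    have hX2 : ∀ σ : Equiv.Perm (Fin n), X σ ^ 2
        = ∑ p : Fin n × Fin n, ∑ q : Fin n × Fin n,
          (if (vp n d p ∧ σ p.2 < σ p.1) ∧ (vp n d q ∧ σ q.2 < σ q.1) then (1:ℚ) else 0) := by
      intro σ
      rw [hX σ, sq, Finset.sum_mul_sum]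
      exact Finset.sum_congr rfl fun p _ => Finset.sum_congr rfl fun q _ =>
        boole_mul_boole _ _
    calc ∑ σ : Equiv.Perm (Fin n), X σ ^ 2
        = ∑ σ : Equiv.Perm (Fin n), ∑ p : Fin n × Fin n, ∑ q : Fin n × Fin n,
            (if (vp n d p ∧ σ p.2 < σ p.1) ∧ (vp n d q ∧ σ q.2 < σ q.1) then (1:ℚ) else 0) :=
          Finset.sum_congr rfl (fun σ _ => hX2 σ)
      _ = ∑ p : Fin n × Fin n, ∑ σ : Equiv.Perm (Fin n), ∑ q : Fin n × Fin n,
            (if (vp n d p ∧ σ p.2 < σ p.1) ∧ (vp n d q ∧ σ q.2 < σ q.1) then (1:ℚ) else 0) :=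
          Finset.sum_comm
      _ = ∑ p : Fin n × Fin n, ∑ q : Fin n × Fin n, ∑ σ : Equiv.Perm (Fin n),
            (if (vp n d p ∧ σ p.2 < σ p.1) ∧ (vp n d q ∧ σ q.2 < σ q.1) then (1:ℚ) else 0) :=
          Finset.sum_congr rfl (fun p _ => Finset.sum_comm)
      _ = ∑ p : Fin n × Fin n, ∑ q : Fin n × Fin n,
            (if vp n d p ∧ vp n d q then N * w p q else 0) := by
          apply Finset.sum_congr rfl; intro p _
          apply Finset.sum_congr rfl; intro q _
          by_cases hp : vp n d p
          · by_cases hq : vp n d q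
            · rw [if_pos ⟨hp, hq⟩]
              have hcond : ∀ σ : Equiv.Perm (Fin n),
                  ((vp n d p ∧ σ p.2 < σ p.1) ∧ (vp n d q ∧ σ q.2 < σ q.1))
                    ↔ ((σ p.2 < σ p.1) ∧ (σ q.2 < σ q.1)) :=
                fun σ => ⟨fun h => ⟨h.1.2, h.2.2⟩, fun h => ⟨⟨hp, h.1⟩, ⟨hq, h.2⟩⟩⟩
              rw [Finset.sum_congr rfl (fun σ _ => if_congr (hcond σ) rfl rfl)]
              rw [show (∑ σ : Equiv.Perm (Fin n),
                  (if (σ p.2 < σ p.1) ∧ (σ q.2 < σ q.1) then (1:ℚ) else 0))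
                  = 1 * ((univ.filter fun σ : Equiv.Perm (Fin n) =>
                      (σ p.2 < σ p.1) ∧ (σ q.2 < σ q.1)).card : ℚ) from
                sum_ind (univ : Finset (Equiv.Perm (Fin n))) _ 1]
              rw [one_mul, count_two p q hp.1 hq.1]
            · simp [hq]
          · simp [hp]
      _ = N * ∑ p ∈ V, ∑ q ∈ V, w p q := by
          rw [Finset.mul_sum, hV, Finset.sum_filter]
          apply Finset.sum_congr rfl; intro p _
          rw [Finset.mul_sum, Finset.sum_filter]
          by_cases hp : vp n d p
          · rw [if_pos hp]
            apply Finset.sum_congr rfl; intro q _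
            rw [if_congr (iff_of_eq (by rw [eq_iff_iff]; exact ⟨fun h => h.2, fun h => ⟨hp, h⟩⟩ : (vp n d p ∧ vp n d q) = (vp n d q))) rfl rfl]
          · rw [if_neg hp]
            apply Finset.sum_eq_zero; intro q _
            rw [if_neg (fun h => hp h.1)]
  rw [stepA, stepB]
  have hm : N * (∑ p ∈ V, ∑ q ∈ V, w p q) / N = ∑ p ∈ V, ∑ q ∈ V, w p q := by
    field_simp
  have hm2 : N / 2 * (V.card : ℚ) / N = (V.card : ℚ) / 2 := by
    field_simp
  rw [hm, hm2]
  have hsub : (∑ p ∈ V, ∑ q ∈ V, w p q) - ((V.card : ℚ)/2)^2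
      = ∑ p ∈ V, ∑ q ∈ V, (w p q - 1/4) := by
    simp only [Finset.sum_sub_distrib, Finset.sum_const, nsmul_eq_mul]
    ring
  rw [hsub]
  set T : Finset (ℕ × ℕ) := (Icc 1 d ×ˢ range n).filter (fun x => x.1 + x.2 < n) with hT
  have sum_T : ∀ f : ℕ × ℕ → ℚ, ∑ x ∈ T, f x
      = ∑ g ∈ Icc 1 d, ∑ i ∈ range (n - g), f (g, i) := by
    intro f
    rw [hT, Finset.sum_filter, Finset.sum_product]
    apply Finset.sum_congr rfl; intro g _
    rw [← Finset.sum_filter]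
    have : (range n).filter (fun i => (g, i).1 + (g, i).2 < n) = range (n - g) := by
      ext i; simp only [mem_filter, mem_range]; omega
    rw [this]
  have hTmem : ∀ x : ℕ × ℕ, x ∈ T ↔ (1 ≤ x.1 ∧ x.1 ≤ d ∧ x.1 + x.2 < n) := by
    intro x
    simp only [hT, Finset.mem_filter, Finset.mem_product, Finset.mem_Icc, Finset.mem_range]
    constructor
    · rintro ⟨⟨⟨h1, h2⟩, h3⟩, h4⟩; omega
    · rintro ⟨h1, h2, h3⟩; omega
  have hVmem : ∀ p : Fin n × Fin n, p ∈ V ↔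
      ((p.1 : ℕ) < (p.2 : ℕ) ∧ (p.2 : ℕ) ≤ (p.1 : ℕ) + d) := by
    intro p
    simp only [hV, vp, Finset.mem_filter, Finset.mem_univ, true_and, Fin.lt_def]
  have stepE : ∑ p ∈ V, ∑ q ∈ V, (w p q - 1/4) = ∑ x ∈ T, ∑ y ∈ T, Gn x y := by
    rw [← Finset.sum_product', ← Finset.sum_product']
    refine Finset.sum_bij'
      (fun (z : (Fin n × Fin n) × (Fin n × Fin n)) _ =>
        ((((z.1.2 : ℕ) - (z.1.1 : ℕ), (z.1.1 : ℕ)) : ℕ × ℕ),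
         (((z.2.2 : ℕ) - (z.2.1 : ℕ), (z.2.1 : ℕ)) : ℕ × ℕ)))
      (fun (z : (ℕ × ℕ) × (ℕ × ℕ)) hz =>
        ((⟨z.1.2, by
            rw [Finset.mem_product, hTmem, hTmem] at hz; omega⟩,
          ⟨z.1.2 + z.1.1, by
            rw [Finset.mem_product, hTmem, hTmem] at hz; omega⟩),
         (⟨z.2.2, by
            rw [Finset.mem_product, hTmem, hTmem] at hz; omega⟩,
          ⟨z.2.2 + z.2.1, by
            rw [Finset.mem_product, hTmem, hTmem] at hz; omega⟩)))
      ?_ ?_ ?_ ?_ ?_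
    · intro z hz
      rw [Finset.mem_product, hVmem, hVmem] at hz
      rw [Finset.mem_product, hTmem, hTmem]
      have b1 := z.1.2.isLt
      have b2 := z.2.2.isLt
      try dsimp only
      try simp only [Fin.val_mk, eq_self_iff_true, true_and, and_true]
      omega
    · intro z hz
      have hz' := hz
      rw [Finset.mem_product, hTmem, hTmem] at hz'
      rw [Finset.mem_product, hVmem, hVmem]
      try beta_reduce
      try dsimp only
      try simp only [Fin.val_mk, eq_self_iff_true, true_and, and_true]
      omega
    · intro z hz
      rw [Finset.mem_product, hVmem, hVmem] at hz
      simp only [Prod.ext_iff, Fin.ext_iff]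
      try beta_reduce
      try dsimp only
      try simp only [Fin.val_mk, eq_self_iff_true, true_and, and_true]
      omega
    · intro z hz
      have hz' := hz
      rw [Finset.mem_product, hTmem, hTmem] at hz'
      simp only [Prod.ext_iff]
      try beta_reduce
      try dsimp only
      try simp only [Fin.val_mk, eq_self_iff_true, true_and, and_true]
      omega
    · intro z hz
      rw [Finset.mem_product, hVmem, hVmem] at hz
      exact w_enc z.1 z.2 hz.1.1 hz.2.1
  calc ∑ p ∈ V, ∑ q ∈ V, (w p q - 1/4)
      = ∑ x ∈ T, ∑ y ∈ T, Gn x y := stepE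
    _ = ∑ g1 ∈ Icc 1 d, ∑ i ∈ range (n - g1), ∑ y ∈ T, Gn (g1, i) y := sum_T _
    _ = ∑ g1 ∈ Icc 1 d, ∑ i ∈ range (n - g1), ∑ g2 ∈ Icc 1 d, ∑ k ∈ range (n - g2),
          Gn (g1, i) (g2, k) := by
        apply Finset.sum_congr rfl; intro g1 _
        apply Finset.sum_congr rfl; intro i _
        exact sum_T _
    _ = ∑ g1 ∈ Icc 1 d, ∑ g2 ∈ Icc 1 d, ∑ i ∈ range (n - g1), ∑ k ∈ range (n - g2),
          Gn (g1, i) (g2, k) := by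
        apply Finset.sum_congr rfl; intro g1 _
        exact Finset.sum_comm
    _ = ∑ g1 ∈ Icc 1 d, ∑ g2 ∈ Icc 1 d,
          (if g1 = g2 then ((n : ℚ) + g1)/12 else ((min g1 g2 : ℕ) : ℚ)/6) := by
        apply Finset.sum_congr rfl; intro g1 hg1
        apply Finset.sum_congr rfl; intro g2 hg2
        simp only [mem_Icc] at hg1 hg2
        by_cases h : g1 = g2
        · subst h; rw [if_pos rfl]; exact inner_diag n g1 hg1.1 (by omega)
        · rw [if_neg h]; exact inner_off n g1 g2 hg1.1 hg2.1 h (by omega)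
    _ = (d : ℚ) ^ 3 / 18 + (d : ℚ) ^ 2 / 24 + ((n : ℚ) / 12 - 1 / 72) * d := outer_sum n d
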